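/- There exists a compact set K ⊆ T² of two-dimensional measure zero that is a set of uniqueness for A(D̄²). Explicitly, with q₁, q₂, ... an enumeration of [0,1] ∩ ℚ and aₙ = 1/n, the set K = (⋃ₙ {(e^{i qₙ}, e^{i y}) : 0 ≤ y ≤ aₙ}) ∪ {(e^{i x}, 1) : x ∈ [0,1]} works. -/

import Mathlib

open Complex Metric Set MeasureTheory Filter Topology

noncomputable def circleMeasure : Measure ℂ :=
  (ENNReal.ofReal (2 * Real.pi))⁻¹ •
    Measure.map (fun θ : ℝ => Complex.exp (θ * Complex.I)) (volume.restrict (Ioc 0 (2 * Real.pi)))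

lemma exp_mem_sphere (x : ℝ) : Complex.exp (x * Complex.I) ∈ sphere (0:ℂ) 1 := by
  simp [Complex.norm_exp_ofReal_mul_I]

lemma exp_mem_cb (x : ℝ) : Complex.exp (x * Complex.I) ∈ closedBall (0:ℂ) 1 := by
  simp [Complex.norm_exp_ofReal_mul_I]

lemma exists_rotation (c L θ : ℝ) (hL : 0 < L) {N : ℕ} (hN : 2 * Real.pi + L < N * L) :
    ∃ k : ℕ, k < N ∧ ∃ m : ℤ, ∃ y ∈ Icc c (c + L), (k:ℝ) * L + θ = y + 2 * Real.pi * m := by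
  have hπ : (0:ℝ) < 2 * Real.pi := by positivity
  set m : ℤ := ⌈(θ - c) / (2 * Real.pi)⌉ with hm
  have h1 : θ - 2 * Real.pi * m ≤ c := by
    have h := Int.le_ceil ((θ - c) / (2 * Real.pi))
    nlinarith [mul_le_mul_of_nonneg_right h hπ.le,
      div_mul_cancel₀ (θ - c) hπ.ne']
  have h2 : c - 2 * Real.pi < θ - 2 * Real.pi * m := by
    have h := Int.ceil_lt_add_one ((θ - c) / (2 * Real.pi))
    nlinarith [mul_lt_mul_of_pos_right h hπ,
      div_mul_cancel₀ (θ - c) hπ.ne']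
  set x : ℝ := c - (θ - 2 * Real.pi * m) with hx
  have hx0 : 0 ≤ x := sub_nonneg.2 h1
  have hx2 : x < 2 * Real.pi := by simp only [hx]; linarith
  set j : ℤ := ⌈x / L⌉ with hj
  have hj0 : 0 ≤ j := Int.ceil_nonneg (by positivity)
  refine ⟨j.toNat, ?_, m, (j.toNat : ℝ) * L + (θ - 2 * Real.pi * m), ⟨?_, ?_⟩, by ring⟩
  all_goals
    have hkj : ((j.toNat : ℕ) : ℝ) = (j : ℝ) := by exact_mod_cast Int.toNat_of_nonneg hj0
    have hxL : x / L * L = x := div_mul_cancel₀ _ hL.ne'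
    have hk1 : x ≤ (j.toNat : ℝ) * L := by
      rw [hkj]; nlinarith [mul_le_mul_of_nonneg_right (Int.le_ceil (x / L)) hL.le]
    have hk2 : (j.toNat : ℝ) * L ≤ x + L := by
      rw [hkj]; nlinarith [mul_lt_mul_of_pos_right (Int.ceil_lt_add_one (x / L)) hL]
  · by_contra hcon
    push_neg at hcon
    have : (N:ℝ) * L ≤ (j.toNat : ℝ) * L :=
      mul_le_mul_of_nonneg_right (by exact_mod_cast hcon) hL.le
    linarith
  · simp only [hx] at hk1; linarith
  · simp only [hx] at hk2; linarith

lemma discAlg_zero_of_arc {u : ℂ → ℂ}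
    (hc : ContinuousOn u (closedBall 0 1)) (hd : DifferentiableOn ℂ u (ball 0 1))
    {c d : ℝ} (hcd : c < d) (hvan : ∀ y ∈ Icc c d, u (Complex.exp (y * Complex.I)) = 0) :
    EqOn u 0 (closedBall (0:ℂ) 1) := by
  obtain ⟨L, hL, rfl⟩ : ∃ L, 0 < L ∧ d = c + L := ⟨d - c, sub_pos.2 hcd, by ring⟩
  obtain ⟨N, hN⟩ : ∃ N : ℕ, 2 * Real.pi + L < N * L := by
    obtain ⟨N, hN⟩ := exists_nat_gt ((2 * Real.pi + L) / L)
    exact ⟨N, (div_lt_iff₀ hL).1 hN⟩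
  set e : ℕ → ℂ := fun k => Complex.exp (((k : ℝ) * L : ℝ) * Complex.I) with he
  have hee : ∀ k, ‖e k‖ = 1 := fun k => by simp [he, Complex.norm_exp]
  have hene : ∀ k, e k ≠ 0 := fun k => Complex.exp_ne_zero _
  set U : ℂ → ℂ := fun z => ∏ k ∈ Finset.range N, u (e k * z) with hUdef
  have hmapsC : ∀ k, MapsTo (fun z => e k * z) (closedBall (0:ℂ) 1) (closedBall (0:ℂ) 1) := by
    intro k z hz
    simp only [mem_closedBall_zero_iff] at hz ⊢
    rw [norm_mul, hee k, one_mul]; exact hz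
  have hmapsB : ∀ k, MapsTo (fun z => e k * z) (ball (0:ℂ) 1) (ball (0:ℂ) 1) := by
    intro k z hz
    simp only [mem_ball_zero_iff] at hz ⊢
    rw [norm_mul, hee k, one_mul]; exact hz
  have hUc : ContinuousOn U (closedBall 0 1) :=
    continuousOn_finset_prod _ fun k _ =>
      hc.comp ((continuous_const.mul continuous_id).continuousOn) (hmapsC k)
  have hUd : DifferentiableOn ℂ U (ball 0 1) :=
    DifferentiableOn.fun_finsetProd fun k _ =>
      hd.comp (((differentiable_const _).mul differentiable_id).differentiableOn) (hmapsB k)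
  -- U vanishes on the sphere
  have hUsphere : ∀ z ∈ sphere (0:ℂ) 1, ‖U z‖ ≤ 0 := by
    intro z hz
    have habs : ‖z‖ = 1 := by
      simpa using mem_sphere_zero_iff_norm.1 hz
    have hz' : Complex.exp ((Complex.arg z : ℝ) * Complex.I) = z := by
      have h0 := Complex.norm_mul_exp_arg_mul_I z
      rw [habs] at h0; simpa using h0
    obtain ⟨k, hkN, m, y, hymem, hkey⟩ := exists_rotation c L (Complex.arg z) hL hN
    have key : e k * z = Complex.exp ((y:ℝ) * Complex.I) := by
      rw [← hz', he, ← Complex.exp_add]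
      calc Complex.exp (((k:ℝ) * L : ℝ) * Complex.I + (Complex.arg z : ℝ) * Complex.I)
          = Complex.exp ((((k:ℝ) * L + Complex.arg z : ℝ) : ℂ) * Complex.I) := by
            push_cast; ring_nf
        _ = Complex.exp (((y + 2 * Real.pi * m : ℝ) : ℂ) * Complex.I) := by rw [hkey]
        _ = Complex.exp ((y:ℝ) * Complex.I) * Complex.exp ((m:ℂ) * (2 * (Real.pi:ℂ) * Complex.I)) := by
            rw [← Complex.exp_add]; push_cast; ring_nf
        _ = Complex.exp ((y:ℝ) * Complex.I) := by
            rw [Complex.exp_int_mul_two_pi_mul_I, mul_one]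
    have hz0 : U z = 0 :=
      Finset.prod_eq_zero (Finset.mem_range.2 hkN) (by rw [key]; exact hvan y hymem)
    simp [hz0]
  -- maximum modulus: U = 0 on the closed ball
  have hU0 : ∀ z ∈ closedBall (0:ℂ) 1, U z = 0 := by
    intro z hz
    have hcl : closure (ball (0:ℂ) 1) = closedBall (0:ℂ) 1 := closure_ball 0 one_ne_zero
    have := Complex.norm_le_of_forall_mem_frontier_norm_le (isBounded_ball (x := (0:ℂ)) (r := 1))
      ⟨hUd, by rw [hcl]; exact hUc⟩
      (C := 0) (by rw [frontier_ball 0 one_ne_zero]; exact hUsphere) (z := z) (by rw [hcl]; exact hz)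
    simpa using norm_le_zero_iff.1 this
  -- u = 0 on the open ball
  have hball : EqOn u 0 (ball (0:ℂ) 1) := by
    by_contra hne
    simp only [EqOn, not_forall] at hne
    push_neg at hne
    obtain ⟨z₀, hz₀, hz₀ne⟩ := hne
    simp only [Pi.zero_apply] at hz₀ne
    have hv : ∀ k, ¬ EqOn (fun z => u (e k * z)) 0 (ball (0:ℂ) 1) := by
      intro k hEq
      apply hz₀ne
      have hmem : (e k)⁻¹ * z₀ ∈ ball (0:ℂ) 1 := by
        simp only [mem_ball_zero_iff] at hz₀ ⊢
        rw [norm_mul, norm_inv, hee k, inv_one, one_mul]; exact hz₀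
      have h0 := hEq hmem
      simpa [← mul_assoc, mul_inv_cancel₀ (hene k)] using h0
    have hana : ∀ k, AnalyticOnNhd ℂ (fun z => u (e k * z)) (ball (0:ℂ) 1) :=
      fun k => (hd.comp (((differentiable_const _).mul differentiable_id).differentiableOn)
        (hmapsB k)).analyticOnNhd isOpen_ball
    have hev : ∀ k, ∀ᶠ w in 𝓝[≠] (0:ℂ), u (e k * w) ≠ 0 := by
      intro k
      by_contra hcon
      rw [Filter.not_eventually] at hcon
      have hfreq : ∃ᶠ w in 𝓝[≠] (0:ℂ), u (e k * w) = 0 := hcon.mono fun w hw => not_not.1 hw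
      exact hv k ((hana k).eqOn_zero_of_preconnected_of_frequently_eq_zero
        (convex_ball (0:ℂ) 1).isPreconnected (mem_ball_self one_pos) hfreq)
    have hball_mem : ∀ᶠ w in 𝓝[≠] (0:ℂ), w ∈ ball (0:ℂ) 1 :=
      eventually_nhdsWithin_of_eventually_nhds
        (eventually_of_mem (isOpen_ball.mem_nhds (mem_ball_self one_pos)) fun x hx => hx)
    have hall : ∀ᶠ w in 𝓝[≠] (0:ℂ),
        (∀ k ∈ Finset.range N, u (e k * w) ≠ 0) ∧ w ∈ ball (0:ℂ) 1 :=
      ((Filter.eventually_all_finset _).2 fun k _ => hev k).and hball_mem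
    obtain ⟨w, hw1, hw2⟩ := hall.exists
    exact (Finset.prod_ne_zero_iff.2 hw1) (hU0 w (ball_subset_closedBall hw2))
  exact hball.of_subset_closure hc continuousOn_const ball_subset_closedBall
    (by rw [closure_ball (0:ℂ) one_ne_zero])

lemma slice_snd {h : ℂ × ℂ → ℂ}
    (hc : ContinuousOn h (closedBall (0:ℂ) 1 ×ˢ closedBall (0:ℂ) 1))
    (hd : DifferentiableOn ℂ h (ball (0:ℂ) 1 ×ˢ ball (0:ℂ) 1))
    {w : ℂ} (hw : w ∈ closedBall (0:ℂ) 1) :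
    ContinuousOn (fun z => h (w, z)) (closedBall (0:ℂ) 1) ∧
    DifferentiableOn ℂ (fun z => h (w, z)) (ball (0:ℂ) 1) := by
  constructor
  · exact hc.comp ((continuous_const.prodMk continuous_id).continuousOn)
      (fun z hz => mk_mem_prod hw hz)
  · set F : ℕ → ℂ → ℂ := fun n z => h ((1 - 1/((n:ℝ)+1)) • w, z) with hF
    have hwn : ∀ n : ℕ, (1 - 1/((n:ℝ)+1)) • w ∈ ball (0:ℂ) 1 := by
      intro n
      have h1 : (0:ℝ) < 1/((n:ℝ)+1) := by positivity
      have h2 : 1/((n:ℝ)+1) ≤ 1 := by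
        rw [div_le_one (by positivity)]; linarith [Nat.cast_nonneg (α := ℝ) n]
      rw [mem_ball_zero_iff, norm_smul, Real.norm_of_nonneg (by linarith : (0:ℝ) ≤ 1 - 1/((n:ℝ)+1))]
      have hwle : ‖w‖ ≤ 1 := mem_closedBall_zero_iff.1 hw
      nlinarith [norm_nonneg w]
    have hFd : ∀ n, DifferentiableOn ℂ (F n) (ball (0:ℂ) 1) := by
      intro n
      exact hd.comp ((differentiable_const _).prodMk differentiable_id).differentiableOn
        (fun z hz => mk_mem_prod (hwn n) hz)
    have hcpt : IsCompact (closedBall (0:ℂ) 1 ×ˢ closedBall (0:ℂ) 1) :=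
      (isCompact_closedBall _ _).prod (isCompact_closedBall _ _)
    have huc : UniformContinuousOn h (closedBall (0:ℂ) 1 ×ˢ closedBall (0:ℂ) 1) :=
      hcpt.uniformContinuousOn_of_continuous hc
    have htuo : TendstoUniformlyOn F (fun z => h (w, z)) atTop (ball (0:ℂ) 1) := by
      rw [Metric.tendstoUniformlyOn_iff]
      intro ε hε
      rw [Metric.uniformContinuousOn_iff] at huc
      obtain ⟨δ, hδ, hδ'⟩ := huc ε hε
      have htend : Tendsto (fun n : ℕ => 1/((n:ℝ)+1)) atTop (𝓝 0) :=
        tendsto_one_div_add_atTop_nhds_zero_nat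
      filter_upwards [htend.eventually_lt_const hδ] with n hn z hz
      have hz' : z ∈ closedBall (0:ℂ) 1 := ball_subset_closedBall hz
      apply hδ' (w, z) (mk_mem_prod hw hz') ((1 - 1/((n:ℝ)+1)) • w, z)
        (mk_mem_prod (ball_subset_closedBall (hwn n)) hz')
      rw [Prod.dist_eq]
      simp only [dist_self]
      rw [max_eq_left dist_nonneg, dist_eq_norm]
      have : w - (1 - 1/((n:ℝ)+1)) • w = (1/((n:ℝ)+1)) • w := by
        rw [sub_smul, one_smul]; ring_nf
      rw [this, norm_smul, Real.norm_of_nonneg (by positivity : (0:ℝ) ≤ 1/((n:ℝ)+1))]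
      have hwle : ‖w‖ ≤ 1 := mem_closedBall_zero_iff.1 hw
      have h1 : (0:ℝ) < 1/((n:ℝ)+1) := by positivity
      nlinarith [norm_nonneg w]
    exact (htuo.tendstoLocallyUniformlyOn).differentiableOn
      (Filter.Eventually.of_forall hFd) isOpen_ball

lemma slice_fst {h : ℂ × ℂ → ℂ}
    (hc : ContinuousOn h (closedBall (0:ℂ) 1 ×ˢ closedBall (0:ℂ) 1))
    (hd : DifferentiableOn ℂ h (ball (0:ℂ) 1 ×ˢ ball (0:ℂ) 1))
    {z : ℂ} (hz : z ∈ closedBall (0:ℂ) 1) :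
    ContinuousOn (fun w => h (w, z)) (closedBall (0:ℂ) 1) ∧
    DifferentiableOn ℂ (fun w => h (w, z)) (ball (0:ℂ) 1) := by
  have hc' : ContinuousOn (fun p : ℂ × ℂ => h (p.2, p.1))
      (closedBall (0:ℂ) 1 ×ˢ closedBall (0:ℂ) 1) :=
    hc.comp ((continuous_snd.prodMk continuous_fst).continuousOn)
      (fun p hp => mk_mem_prod hp.2 hp.1)
  have hd' : DifferentiableOn ℂ (fun p : ℂ × ℂ => h (p.2, p.1))
      (ball (0:ℂ) 1 ×ˢ ball (0:ℂ) 1) :=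
    hd.comp (differentiable_snd.prodMk differentiable_fst).differentiableOn
      (fun p hp => mk_mem_prod hp.2 hp.1)
  exact slice_snd hc' hd' hz

lemma ratIcc_dense : Icc (0:ℝ) 1 ⊆ closure {x : ℝ | x ∈ Icc (0:ℝ) 1 ∧ ∃ r : ℚ, (r:ℝ) = x} := by
  intro x hx
  rw [Metric.mem_closure_iff]
  intro ε hε
  rcases eq_or_lt_of_le hx.1 with h0 | h0
  · exact ⟨0, ⟨⟨le_refl 0, zero_le_one⟩, 0, by norm_num⟩, by
      simp [dist_eq, ← h0, hε]⟩
  · obtain ⟨r, hr1, hr2⟩ := exists_rat_btwn (max_lt h0 (by linarith : x - ε < x))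
    refine ⟨r, ⟨⟨?_, ?_⟩, r, rfl⟩, ?_⟩
    · exact le_of_lt (lt_of_le_of_lt (le_max_left _ _) hr1)
    · exact le_trans hr2.le hx.2
    · rw [Real.dist_eq, abs_lt]
      constructor
      · linarith
      · have := lt_of_le_of_lt (le_max_right _ _) hr1; linarith
  
lemma exp_measurable : Measurable (fun θ : ℝ => Complex.exp (θ * Complex.I)) :=
  ((Complex.continuous_ofReal.mul continuous_const).cexp).measurable

lemma circleMeasure_univ : circleMeasure univ = 1 := by
  rw [circleMeasure, Measure.smul_apply, Measure.map_apply exp_measurable MeasurableSet.univ]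
  simp only [preimage_univ, Measure.restrict_apply MeasurableSet.univ, univ_inter,
    Real.volume_Ioc]
  rw [sub_zero, smul_eq_mul, ENNReal.inv_mul_cancel]
  · simp [Real.pi_pos]
  · exact ENNReal.ofReal_ne_top

instance : IsFiniteMeasure circleMeasure :=
  ⟨by rw [circleMeasure_univ]; exact ENNReal.one_lt_top⟩

lemma circleMeasure_singleton (z : ℂ) : circleMeasure {z} = 0 := by
  rw [circleMeasure, Measure.smul_apply,
    Measure.map_apply exp_measurable (measurableSet_singleton z)]
  have hcnt : ((fun θ : ℝ => Complex.exp (θ * Complex.I)) ⁻¹' {z}).Countable := by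
    by_cases hne : ((fun θ : ℝ => Complex.exp (θ * Complex.I)) ⁻¹' {z}) = ∅
    · rw [hne]; exact countable_empty
    · obtain ⟨θ₀, hθ₀⟩ := nonempty_iff_ne_empty.2 hne
      simp only [mem_preimage, mem_singleton_iff] at hθ₀
      apply Set.Countable.mono _ (Set.countable_range (fun n : ℤ => θ₀ + n * (2 * Real.pi)))
      intro θ hθ
      simp only [mem_preimage, mem_singleton_iff] at hθ
      rw [← hθ₀] at hθ
      obtain ⟨n, hn⟩ := (Complex.exp_eq_exp_iff_exists_int).1 hθ
      refine ⟨n, ?_⟩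
      have him := congrArg Complex.im hn
      simp at him
      simp [him]
  have : (volume.restrict (Ioc 0 (2 * Real.pi)))
      ((fun θ : ℝ => Complex.exp (θ * Complex.I)) ⁻¹' {z}) = 0 := by
    apply le_antisymm _ zero_le
    calc (volume.restrict (Ioc 0 (2 * Real.pi))) _ ≤ volume _ :=
          Measure.restrict_le_self _
      _ = 0 := hcnt.measure_zero _
  rw [this]; simp

/-- there is a compact subset of `T²` of zero two-dimensional measure that
is a set of uniqueness for the bidisc algebra `A(D̄²)`. Explicitly, given an enumeration
`q` of `[0,1] ∩ ℚ` and `aₙ = 1/n`, the set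
`K = (⋃ₙ {(e^{i qₙ}, e^{i y}) : 0 ≤ y ≤ aₙ}) ∪ {(e^{i x}, 1) : x ∈ [0,1]}` works. -/
theorem stmt17 (q : ℕ → ℝ)
    (hq : Set.range q = {x : ℝ | x ∈ Icc (0 : ℝ) 1 ∧ ∃ r : ℚ, (r : ℝ) = x})
    (K : Set (ℂ × ℂ))
    (hK : K = (⋃ n : ℕ, {p : ℂ × ℂ | ∃ y : ℝ, 0 ≤ y ∧ y ≤ 1 / (n + 1) ∧
        p = (Complex.exp (q n * Complex.I), Complex.exp (y * Complex.I))}) ∪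
      {p : ℂ × ℂ | ∃ x ∈ Icc (0 : ℝ) 1, p = (Complex.exp (x * Complex.I), 1)}) :
    IsCompact K ∧ K ⊆ sphere (0 : ℂ) 1 ×ˢ sphere (0 : ℂ) 1 ∧
    (circleMeasure.prod circleMeasure) K = 0 ∧
    (∀ f g : ℂ × ℂ → ℂ,
      ContinuousOn f (closedBall (0 : ℂ) 1 ×ˢ closedBall (0 : ℂ) 1) →
      DifferentiableOn ℂ f (ball (0 : ℂ) 1 ×ˢ ball (0 : ℂ) 1) →
      ContinuousOn g (closedBall (0 : ℂ) 1 ×ˢ closedBall (0 : ℂ) 1) →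
      DifferentiableOn ℂ g (ball (0 : ℂ) 1 ×ˢ ball (0 : ℂ) 1) →
      EqOn f g K → EqOn f g (closedBall (0 : ℂ) 1 ×ˢ closedBall (0 : ℂ) 1)) := by
  have hqmem : ∀ n, q n ∈ Icc (0:ℝ) 1 := fun n => by
    have hmem : q n ∈ range q := mem_range_self n
    rw [hq] at hmem; exact hmem.1
  have hexpcont : Continuous (fun x : ℝ => Complex.exp (x * Complex.I)) :=
    (Complex.continuous_ofReal.mul continuous_const).cexp
  set A : Set ℂ := (fun x : ℝ => Complex.exp (x * Complex.I)) '' Icc 0 1 with hA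
  have hAc : IsCompact A := isCompact_Icc.image hexpcont
  set E : ℕ → Set ℂ := fun n =>
    (fun y : ℝ => Complex.exp (y * Complex.I)) '' Icc 0 (1/((n:ℝ)+1)) with hE
  have hEc : ∀ n, IsCompact (E n) := fun n => isCompact_Icc.image hexpcont
  set C : ℕ → Set (ℂ × ℂ) := fun n =>
    ({Complex.exp (q n * Complex.I)} : Set ℂ) ×ˢ E n with hC
  have hCc : ∀ n, IsCompact (C n) := fun n => isCompact_singleton.prod (hEc n)
  have hKeq : K = (⋃ n, C n) ∪ (A ×ˢ ({1} : Set ℂ)) := by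
    rw [hK]; congr 1
    · apply iUnion_congr; intro n
      ext p
      simp only [mem_setOf_eq, hC, hE, mem_prod, mem_singleton_iff, mem_image]
      constructor
      · rintro ⟨y, hy0, hy1, rfl⟩
        exact ⟨rfl, y, ⟨hy0, hy1⟩, rfl⟩
      · rintro ⟨h1, y, hy, h2⟩
        exact ⟨y, hy.1, hy.2, by rw [Prod.ext_iff]; exact ⟨h1, h2.symm⟩⟩
    · ext p
      simp only [mem_setOf_eq, hA, mem_prod, mem_singleton_iff, mem_image]
      constructor
      · rintro ⟨x, hx, rfl⟩
        exact ⟨⟨x, hx, rfl⟩, rfl⟩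
      · rintro ⟨⟨x, hx, h1⟩, h2⟩
        exact ⟨x, hx, by rw [Prod.ext_iff]; exact ⟨h1.symm, h2⟩⟩
  have hEmono : ∀ {a b : ℕ}, a ≤ b → E b ⊆ E a := by
    intro a b hab z hz
    obtain ⟨y, hy, rfl⟩ := hz
    refine ⟨y, ⟨hy.1, hy.2.trans ?_⟩, rfl⟩
    apply div_le_div_of_nonneg_left one_pos.le (by positivity)
    have : (a:ℝ) ≤ b := by exact_mod_cast hab
    linarith
  have hCsub : ∀ N n : ℕ, N ≤ n → C n ⊆ A ×ˢ E N := by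
    intro N n hNn
    rintro ⟨p1, p2⟩ ⟨hp1, hp2⟩
    simp only [mem_singleton_iff] at hp1
    exact ⟨by rw [hp1]; exact ⟨q n, hqmem n, rfl⟩, hEmono hNn hp2⟩
  -- closedness
  have hclosed : IsClosed ((⋃ n, C n) ∪ (A ×ˢ ({1} : Set ℂ))) := by
    apply isClosed_of_closure_subset
    intro p hp
    rw [closure_union] at hp
    rcases hp with hp | hp
    · by_cases hmem : p ∈ ⋃ n, C n
      · exact Or.inl hmem
      right
      have hAE : ∀ N : ℕ, p ∈ A ×ˢ E N := by
        intro N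
        have hsplit : (⋃ n, C n) = (⋃ n ∈ Finset.range N, C n) ∪ ⋃ n, C (n + N) := by
          ext x
          simp only [mem_iUnion, mem_union, Finset.mem_range]
          constructor
          · rintro ⟨n, hn⟩
            rcases lt_or_ge n N with hlt | hge
            · exact Or.inl ⟨n, hlt, hn⟩
            · exact Or.inr ⟨n - N, by rwa [Nat.sub_add_cancel hge]⟩
          · rintro (⟨n, _, hn⟩ | ⟨n, hn⟩) <;> exact ⟨_, hn⟩
        have hp' := hp
        rw [hsplit, closure_union] at hp'
        rcases hp' with hp' | hp'
        · exfalso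
          apply hmem
          have hcl : IsClosed (⋃ n ∈ Finset.range N, C n) :=
            Set.Finite.isClosed_biUnion (Finset.finite_toSet _) fun n _ => (hCc n).isClosed
          have hss : (⋃ n ∈ Finset.range N, C n) ⊆ ⋃ n, C n := by
            intro x hx
            simp only [mem_iUnion] at hx ⊢
            obtain ⟨n, _, hn⟩ := hx
            exact ⟨n, hn⟩
          exact hss (hcl.closure_subset hp')
        · have hsub2 : (⋃ n, C (n + N)) ⊆ A ×ˢ E N :=
            iUnion_subset fun n => hCsub N (n + N) (Nat.le_add_left N n)
          exact (closure_minimal hsub2 ((hAc.prod (hEc N)).isClosed)) hp'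
      have hp2 : p.2 = 1 := by
        have hlim : ∀ N : ℕ, ‖p.2 - 1‖ ≤ 2 * (1/((N:ℝ)+1)) := by
          intro N
          obtain ⟨y, hy, h2⟩ := (hAE N).2
          have hyle : y ≤ 1 := hy.2.trans (by
            rw [div_le_one (by positivity)]; linarith [Nat.cast_nonneg (α := ℝ) N])
          have hyabs : ‖(y:ℂ) * Complex.I‖ = |y| := by simp
          have habs : ‖(y:ℂ) * Complex.I‖ ≤ 1 := by
            rw [hyabs, _root_.abs_of_nonneg hy.1]; exact hyle
          have hb := Complex.norm_exp_sub_one_le habs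
          rw [← h2]
          calc ‖Complex.exp ((y:ℂ) * Complex.I) - 1‖
              = ‖Complex.exp ((y:ℂ) * Complex.I) - 1‖ := rfl
            _ ≤ 2 * ‖(y:ℂ) * Complex.I‖ := hb
            _ ≤ 2 * (1/((N:ℝ)+1)) := by
                rw [hyabs, _root_.abs_of_nonneg hy.1]; linarith [hy.2]
        have ht : Tendsto (fun N : ℕ => 2 * (1/((N:ℝ)+1))) atTop (𝓝 0) := by
          simpa using tendsto_one_div_add_atTop_nhds_zero_nat.const_mul (2:ℝ)
        have h0 : ‖p.2 - 1‖ ≤ 0 := ge_of_tendsto ht (Eventually.of_forall hlim)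
        have := norm_le_zero_iff.1 h0
        exact sub_eq_zero.1 this
      exact ⟨(hAE 0).1, by simp [hp2]⟩
    · exact Or.inr (((hAc.prod isCompact_singleton).isClosed).closure_subset hp)
  -- subset of torus
  have hsub : K ⊆ sphere (0 : ℂ) 1 ×ˢ sphere (0 : ℂ) 1 := by
    rw [hK]; rintro p (hp | hp)
    · simp only [mem_iUnion, mem_setOf_eq] at hp
      obtain ⟨n, y, _, _, rfl⟩ := hp
      exact ⟨exp_mem_sphere _, exp_mem_sphere _⟩
    · obtain ⟨x, _, rfl⟩ := hp
      exact ⟨exp_mem_sphere _, by simp⟩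
  have hKcompact : IsCompact K := by
    apply IsCompact.of_isClosed_subset
      ((isCompact_closedBall (0:ℂ) 1).prod (isCompact_closedBall (0:ℂ) 1))
      (hKeq ▸ hclosed)
    exact hsub.trans (prod_mono sphere_subset_closedBall sphere_subset_closedBall)
  refine ⟨hKcompact, hsub, ?_, ?_⟩
  · -- measure zero
    have hcover : K ⊆ (⋃ n, ({Complex.exp (q n * Complex.I)} : Set ℂ) ×ˢ (univ : Set ℂ)) ∪
        (univ : Set ℂ) ×ˢ ({1} : Set ℂ) := by
      rw [hK]; rintro p (hp | hp)
      · simp only [mem_iUnion, mem_setOf_eq] at hp ⊢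
        obtain ⟨n, y, _, _, rfl⟩ := hp
        exact Or.inl (mem_iUnion.2 ⟨n, ⟨rfl, trivial⟩⟩)
      · obtain ⟨x, _, rfl⟩ := hp
        exact Or.inr ⟨trivial, rfl⟩
    apply measure_mono_null hcover
    apply measure_union_null
    · apply measure_iUnion_null
      intro n
      rw [Measure.prod_prod, circleMeasure_singleton, zero_mul]
    · rw [Measure.prod_prod, circleMeasure_singleton, mul_zero]
  · -- uniqueness
    intro f g hf hf' hg hg' hKeqfg
    set h : ℂ × ℂ → ℂ := fun p => f p - g p with hh
    have hc : ContinuousOn h (closedBall (0:ℂ) 1 ×ˢ closedBall (0:ℂ) 1) := hf.sub hg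
    have hd : DifferentiableOn ℂ h (ball (0:ℂ) 1 ×ˢ ball (0:ℂ) 1) := hf'.sub hg'
    have hK0 : ∀ p ∈ K, h p = 0 := fun p hp => sub_eq_zero.2 (hKeqfg hp)
    -- step C: column slices vanish
    have hColumn : ∀ n : ℕ, ∀ z ∈ closedBall (0:ℂ) 1,
        h (Complex.exp ((q n : ℝ) * Complex.I), z) = 0 := by
      intro n
      have hsl := slice_snd hc hd (exp_mem_cb (q n))
      have hvan : ∀ y ∈ Icc (0:ℝ) (1/((n:ℝ)+1)),
          (fun z => h (Complex.exp ((q n : ℝ) * Complex.I), z)) (Complex.exp (y * Complex.I)) = 0 := by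
        intro y hy
        apply hK0
        rw [hK]
        exact Or.inl (mem_iUnion.2 ⟨n, y, hy.1, hy.2, rfl⟩)
      have := discAlg_zero_of_arc hsl.1 hsl.2 (c := 0) (d := 1/((n:ℝ)+1)) (by positivity) hvan
      intro z hz
      exact this hz
    -- conclusion
    intro p hp
    obtain ⟨hp1, hp2⟩ := hp
    have hsl := slice_fst hc hd hp2
    have harc : ∀ x ∈ Icc (0:ℝ) 1, h (Complex.exp ((x:ℝ) * Complex.I), p.2) = 0 := by
      have hEq : EqOn (fun x : ℝ => h (Complex.exp (x * Complex.I), p.2)) 0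
          {x : ℝ | x ∈ Icc (0 : ℝ) 1 ∧ ∃ r : ℚ, (r : ℝ) = x} := by
        intro x hx
        rw [← hq] at hx
        obtain ⟨n, rfl⟩ := hx
        exact hColumn n p.2 hp2
      have hcont : ContinuousOn (fun x : ℝ => h (Complex.exp (x * Complex.I), p.2)) (Icc 0 1) :=
        (hsl.1.comp hexpcont.continuousOn (fun x _ => exp_mem_cb x))
      exact hEq.of_subset_closure hcont continuousOn_const (fun x hx => hx.1) ratIcc_dense
    have hfinal := discAlg_zero_of_arc hsl.1 hsl.2 (c := 0) (d := 1) one_pos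
      (fun y hy => harc y hy)
    have : h (p.1, p.2) = 0 := hfinal hp1
    have hp0 : h p = 0 := by rwa [Prod.mk.eta] at this
    exact sub_eq_zero.1 hp0
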